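/- (Theorem 7, convergence of the iterative scheme) Let C be an initial configuration of the BRP and let opt = f(Fin B) be the minimum number of relocations over feasible move sequences. For L : ℕ, call a partial plan with L relocations any finite sequence of retrievals and relocations starting from C that contains exactly L relocations, and define g(L) = L + (the minimum, over all partial plans with L relocations, of the number of direct blockages in the resulting configuration). Then: (i) for every L ≤ opt, L ≤ g(L) ≤ opt; (ii) g(opt) = opt; (iii) for every L < opt, g(L) > L. Consequently, for any starting value L₀ ≤ opt, the iteration L_{i+1} = g(L_i) produces a strictly increasing sequence until it reaches opt, and it reaches opt after at most opt − L₀ iterations. -/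

import Mathlib

/-- A configuration of the BRP: each stack holds a list of blocks, bottom to top. -/
abbrev Config (B S : ℕ) := Fin S → List (Fin B)

/-- Every block occurs exactly once among the stacks. -/
def IsConfig {B S : ℕ} (C : Config B S) : Prop :=
  ∀ b : Fin B, (∑ s : Fin S, (C s).count b) = 1

/-- `a` lies strictly below `b` in stack `s` of `C`. -/
def StrictlyBelow {B S : ℕ} (C : Config B S) (s : Fin S) (a b : Fin B) : Prop :=
  ∃ i j : ℕ, i < j ∧ (C s)[i]? = some a ∧ (C s)[j]? = some b

/-- A block is badly placed if some smaller-labelled block lies below it in its stack. -/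
def BadlyPlaced {B S : ℕ} (C : Config B S) (b : Fin B) : Prop :=
  ∃ s a, a < b ∧ StrictlyBelow C s a b

/-- Moves: retrieve the top block of a stack, or relocate the top block of one
stack onto another stack. -/
inductive Move (S : ℕ) where
  | retrieve (s : Fin S)
  | relocate (src dst : Fin S)

def applyMove {B S : ℕ} (C : Config B S) : Move S → Config B S
  | .retrieve s => Function.update C s (C s).dropLast
  | .relocate src dst =>
    match (C src).getLast? with
    | some b =>
      let C' := Function.update C src (C src).dropLast
      Function.update C' dst (C' dst ++ [b])
    | none => C

def Enabled {B S : ℕ} (C : Config B S) : Move S → Prop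
  | .retrieve s => ∃ b, (C s).getLast? = some b ∧ ∀ (s' : Fin S), ∀ b' ∈ C s', b ≤ b'
  | .relocate src dst => src ≠ dst ∧ C src ≠ []

def play {B S : ℕ} (C : Config B S) : List (Move S) → Config B S
  | [] => C
  | m :: ms => play (applyMove C m) ms

def AllEnabled {B S : ℕ} (C : Config B S) : List (Move S) → Prop
  | [] => True
  | m :: ms => Enabled C m ∧ AllEnabled (applyMove C m) ms

/-- A feasible move sequence: every move is enabled and at the end all blocks
have been retrieved. -/
def Feasible {B S : ℕ} (C : Config B S) (ms : List (Move S)) : Prop :=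
  AllEnabled C ms ∧ ∀ s, play C ms s = []

/-- `b` is the block moved by `m` (a relocation) performed in configuration `C`. -/
def MovedBlock {B S : ℕ} (C : Config B S) (m : Move S) (b : Fin B) : Prop :=
  ∃ src dst, m = .relocate src dst ∧ src ≠ dst ∧ (C src).getLast? = some b

/-- The four types of relocation moves. -/
inductive MType where
  | BB | BG | GB | GG

/-- The relocation `m`, moving block `b` from configuration `C`, has the given type. -/
def MTypeOf {B S : ℕ} (C : Config B S) (m : Move S) (b : Fin B) : MType → Prop
  | .BB => BadlyPlaced C b ∧ BadlyPlaced (applyMove C m) b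
  | .BG => BadlyPlaced C b ∧ ¬ BadlyPlaced (applyMove C m) b
  | .GB => ¬ BadlyPlaced C b ∧ BadlyPlaced (applyMove C m) b
  | .GG => ¬ BadlyPlaced C b ∧ ¬ BadlyPlaced (applyMove C m) b

/-- `m` is a relocation of a block of `𝔅`. -/
def RelocIn {B S : ℕ} (𝔅 : Set (Fin B)) (C : Config B S) (m : Move S) : Prop :=
  ∃ b ∈ 𝔅, MovedBlock C m b

/-- `m` is a relocation of a block of `𝔅` of type `mt`. -/
def RelocTypeIn {B S : ℕ} (mt : MType) (𝔅 : Set (Fin B)) (C : Config B S) (m : Move S) : Prop :=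
  ∃ b ∈ 𝔅, MovedBlock C m b ∧ MTypeOf C m b mt

/-- `m` is a non-BG relocation of a block of `𝔅`. -/
def RelocNonBGIn {B S : ℕ} (𝔅 : Set (Fin B)) (C : Config B S) (m : Move S) : Prop :=
  ∃ b ∈ 𝔅, MovedBlock C m b ∧ ¬ MTypeOf C m b MType.BG

/-- Count the moves of a sequence satisfying `P` (evaluated in the configuration
in which each move is performed). -/
noncomputable def countMoves {B S : ℕ} (P : Config B S → Move S → Prop) :
    Config B S → List (Move S) → ℕ
  | _, [] => 0
  | C, m :: ms =>
    (@ite ℕ (P C m) (Classical.propDecidable _) 1 0) + countMoves P (applyMove C m) ms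

/-- Minimum over feasible move sequences of the number of moves satisfying `P`. -/
noncomputable def fMin {B S : ℕ} (C : Config B S) (P : Config B S → Move S → Prop) : ℕ :=
  sInf { n | ∃ ms, Feasible C ms ∧ countMoves P C ms = n }

/-- `f(𝔅)`: least number of relocations applied to blocks of `𝔅`. -/
noncomputable def fRel {B S : ℕ} (C : Config B S) (𝔅 : Set (Fin B)) : ℕ :=
  fMin C (RelocIn 𝔅)

/-- `f_mt(𝔅)`: least number of type-`mt` relocations applied to blocks of `𝔅`. -/
noncomputable def fTyp {B S : ℕ} (C : Config B S) (mt : MType) (𝔅 : Set (Fin B)) : ℕ :=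
  fMin C (RelocTypeIn mt 𝔅)

/-- `f_nonBG(𝔅)`: least number of non-BG relocations applied to blocks of `𝔅`. -/
noncomputable def fNonBG {B S : ℕ} (C : Config B S) (𝔅 : Set (Fin B)) : ℕ :=
  fMin C (RelocNonBGIn 𝔅)

/-- The top 1st layer: the topmost block of each stack. -/
def TopLayer {B S : ℕ} (C : Config B S) : Set (Fin B) :=
  {b | ∃ s, (C s).getLast? = some b}

/-- The top `k` layers: the topmost `k` blocks of every stack. -/
def TopK {B S : ℕ} (C : Config B S) (k : ℕ) : Set (Fin B) :=
  {b | ∃ s, b ∈ (C s).drop ((C s).length - k)}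

/-- The top `j`-th layer: the `j`-th block from the top of every stack. -/
def TopJth {B S : ℕ} (C : Config B S) (j : ℕ) : Set (Fin B) :=
  {b | ∃ s, (C s)[(C s).length - j]? = some b}

/-- A virtual layer: a set of blocks containing exactly one block from each stack. -/
def VirtualLayer {B S : ℕ} (C : Config B S) (V : Set (Fin B)) : Prop :=
  ∀ s : Fin S, ∃! b : Fin B, b ∈ V ∧ b ∈ C s

/-- `a` lies at or below the `V`-block of stack `s`. -/
def AtOrBelowLayer {B S : ℕ} (C : Config B S) (V : Set (Fin B)) (s : Fin S) (a : Fin B) : Prop :=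
  ∃ b j, b ∈ V ∧ (C s)[j]? = some b ∧ a ∈ (C s).take (j + 1)

/-- `V` is a virtual layer satisfying the conditions of Property 5:
(1) in some stack, a block strictly below the `V`-block of that stack has a smaller
label than every block of `V`; (2) every badly placed block of `V` has a label
strictly greater than the minimum label present in stack `s` after deleting all
blocks strictly above the `V`-block of `s`, for every stack `s`. -/
def P5 {B S : ℕ} (C : Config B S) (V : Set (Fin B)) : Prop :=
  VirtualLayer C V ∧
  (∃ s a b, b ∈ V ∧ StrictlyBelow C s a b ∧ ∀ c ∈ V, a < c) ∧
  (∀ b ∈ V, BadlyPlaced C b → ∀ s : Fin S, ∃ a, AtOrBelowLayer C V s a ∧ a < b)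

/-- A pair of virtual layers `V₁` (upper), `V₂` (lower) with shared well-placed
block `bstar` satisfying the conditions of Property 7. -/
def P7 {B S : ℕ} (C : Config B S) (V₁ V₂ : Set (Fin B)) (bstar : Fin B) : Prop :=
  V₁ ∩ V₂ = {bstar} ∧
  ¬ BadlyPlaced C bstar ∧
  (∀ s : Fin S, bstar ∉ C s →
    ∃ b₁ b₂, b₁ ∈ V₁ ∧ b₂ ∈ V₂ ∧ StrictlyBelow C s b₂ b₁) ∧
  P5 C V₁ ∧ P5 C V₂ ∧
  (∀ s : Fin S, ∃ a, AtOrBelowLayer C V₁ s a ∧ a ≤ bstar) ∧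
  (∃ s : Fin S, ∀ a, AtOrBelowLayer C V₁ s a → bstar ≤ a)

/-- Push blocks one by one onto the indicated stacks. -/
def pushAll {B S : ℕ} (C : Config B S) : List (Fin B × Fin S) → Config B S
  | [] => C
  | p :: rest => pushAll (Function.update C p.2 (C p.2 ++ [p.1])) rest

/-- The blocks lying strictly above position `i` of stack `s`, listed from the
top of the stack downward (the processing order of the experiment). -/
def aboveList {B S : ℕ} (C : Config B S) (s : Fin S) (i : ℕ) : List (Fin B) :=
  ((C s).drop (i + 1)).reverse

/-- The arrangement resulting from the experiment of Property 4: the blocks above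
position `i` of stack `s` are relocated exactly once, from the top downward, onto
the stacks listed in `ds`. -/
def expResult {B S : ℕ} (C : Config B S) (s : Fin S) (i : ℕ) (ds : List (Fin S)) :
    Config B S :=
  pushAll (Function.update C s ((C s).take (i + 1))) ((aboveList C s i).zip ds)

/-- The condition of Property 4 (target block at position `i` of stack `sStar`):
in every experiment, some relocated block ends badly placed. -/
def P4Cond {B S : ℕ} (C : Config B S) (sStar : Fin S) (i : ℕ) : Prop :=
  ∀ ds : List (Fin S), ds.length = (aboveList C sStar i).length →
    (∀ d ∈ ds, d ≠ sStar) →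
    ∃ b ∈ aboveList C sStar i, BadlyPlaced (expResult C sStar i ds) b

/-- The set `𝔅⁴`: the blocks above the target block together with, for each
nonempty stack other than the target's stack, its block of minimum label. -/
def B4Set {B S : ℕ} (C : Config B S) (sStar : Fin S) (i : ℕ) : Set (Fin B) :=
  {b | b ∈ aboveList C sStar i} ∪
  {b | ∃ s, s ≠ sStar ∧ b ∈ C s ∧ ∀ b' ∈ C s, b ≤ b'}

/-- The number of direct blockages: adjacent pairs in a stack whose upper block
has a strictly larger label. -/
def directBlockages {B S : ℕ} (C : Config B S) : ℕ :=
  ∑ s : Fin S, (((C s).zip (C s).tail).filter (fun p => decide (p.1 < p.2))).length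

/-- The number of relocations in a move sequence. -/
def relocCount {S : ℕ} (ms : List (Move S)) : ℕ :=
  (ms.filter (fun m => match m with | Move.relocate _ _ => true | Move.retrieve _ => false)).length

/-- The minimum number of relocations over all feasible move sequences. -/
noncomputable def fAll {B S : ℕ} (C : Config B S) : ℕ :=
  sInf { n | ∃ ms, Feasible C ms ∧ relocCount ms = n }

/-- `g(L)`: `L` plus the minimum number of direct blockages over all partial
plans with exactly `L` relocations. -/
noncomputable def gIter {B S : ℕ} (C : Config B S) (L : ℕ) : ℕ :=
  L + sInf { d | ∃ ms : List (Move S), AllEnabled C ms ∧ relocCount ms = L ∧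
      d = directBlockages (play C ms) }


/-! ### Auxiliary lemmas -/

section Aux

lemma zip_tail_concat' {α : Type*} (l : List α) (b : α) :
    (l ++ [b]).zip (l ++ [b]).tail =
      l.zip l.tail ++ (l.getLast?.map (fun x => (x, b))).toList := by
  induction l with
  | nil => simp
  | cons a t ih =>
    cases t with
    | nil => simp
    | cons c w =>
      simp only [List.cons_append, List.tail_cons, List.zip_cons_cons] at *
      rw [ih]
      simp [List.getLast?]

/-- The number of direct blockages within a single stack. -/
def blockCount {B : ℕ} (l : List (Fin B)) : ℕ :=
  ((l.zip l.tail).filter (fun p => decide (p.1 < p.2))).length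

lemma blockCount_concat_le {B : ℕ} (l : List (Fin B)) (b : Fin B) :
    blockCount (l ++ [b]) ≤ blockCount l + 1 := by
  unfold blockCount
  rw [zip_tail_concat', List.filter_append, List.length_append]
  have : ((l.getLast?.map (fun x => (x, b))).toList.filter
      (fun p => decide (p.1 < p.2))).length ≤ 1 := by
    cases l.getLast? <;> simp [List.filter]
    split <;> simp
  omega

lemma le_blockCount_concat {B : ℕ} (l : List (Fin B)) (b : Fin B) :
    blockCount l ≤ blockCount (l ++ [b]) := by
  unfold blockCount
  rw [zip_tail_concat', List.filter_append, List.length_append]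
  omega

lemma blockCount_concat_of_le {B : ℕ} (l : List (Fin B)) (b : Fin B)
    (h : ∀ x ∈ l, ¬ x < b) : blockCount (l ++ [b]) = blockCount l := by
  unfold blockCount
  rw [zip_tail_concat', List.filter_append, List.length_append]
  have : ((l.getLast?.map (fun x => (x, b))).toList.filter
      (fun p => decide (p.1 < p.2))).length = 0 := by
    rcases hl : l.getLast? with _ | x
    · simp
    · have hx : x ∈ l := List.mem_of_mem_getLast? hl
      simp [List.filter, h x hx]
  omega

lemma blockCount_zero_getLast_le {B : ℕ} (l : List (Fin B)) (h : blockCount l = 0) :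
    ∀ x ∈ l, ∀ y, l.getLast? = some y → y ≤ x := by
  induction l using List.reverseRecOn with
  | nil => simp
  | append_singleton t b ih =>
    have ht : blockCount t = 0 :=
      Nat.le_antisymm (h ▸ le_blockCount_concat t b) (Nat.zero_le _)
    intro x hx y hy
    rw [List.getLast?_concat] at hy
    cases hy
    have hpair : ∀ z, t.getLast? = some z → ¬ z < b := by
      intro z hz hlt
      have : blockCount (t ++ [b]) = blockCount t + 1 := by
        unfold blockCount
        rw [zip_tail_concat', List.filter_append, List.length_append, hz]
        simp [List.filter, hlt]
      omega
    rcases List.mem_append.1 hx with hx | hx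
    · rcases t.eq_nil_or_concat' with rfl | ⟨t', z, rfl⟩
      · simp at hx
      · have hz : (t' ++ [z]).getLast? = some z := List.getLast?_concat
        have hbz : ¬ z < b := hpair z hz
        have hzx : z ≤ x := ih ht x hx z hz
        omega
    · simp at hx; subst hx; exact le_refl _

lemma blockCount_dropLast_le {B : ℕ} (l : List (Fin B)) :
    blockCount l.dropLast ≤ blockCount l ∧ blockCount l ≤ blockCount l.dropLast + 1 := by
  rcases l.eq_nil_or_concat' with rfl | ⟨t, b, rfl⟩
  · simp
  · rw [List.dropLast_concat]
    exact ⟨le_blockCount_concat t b, blockCount_concat_le t b⟩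

lemma blockCount_dropLast_of_min {B : ℕ} (l : List (Fin B)) (b : Fin B)
    (hl : l.getLast? = some b) (hmin : ∀ x ∈ l, b ≤ x) :
    blockCount l = blockCount l.dropLast := by
  rcases l.eq_nil_or_concat' with rfl | ⟨t, c, rfl⟩
  · simp at hl
  · rw [List.getLast?_concat] at hl
    cases hl
    rw [List.dropLast_concat]
    exact blockCount_concat_of_le t b fun x hx =>
      not_lt.2 (hmin x (List.mem_append.2 (Or.inl hx)))

lemma directBlockages_eq_sum {B S : ℕ} (C : Config B S) :
    directBlockages C = ∑ s, blockCount (C s) := rfl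

lemma sum_update_nat {S : ℕ} (f : Fin S → ℕ) (s₀ : Fin S) (v : ℕ) :
    (∑ s, Function.update f s₀ v s) + f s₀ = (∑ s, f s) + v := by
  classical
  rw [Finset.sum_update_of_mem (Finset.mem_univ s₀)]
  rw [← Finset.add_sum_erase Finset.univ f (Finset.mem_univ s₀)]
  rw [Finset.sdiff_singleton_eq_erase]
  ring

lemma directBlockages_update {B S : ℕ} (D : Config B S) (s₀ : Fin S) (v : List (Fin B)) :
    directBlockages (Function.update D s₀ v) + blockCount (D s₀) =
      directBlockages D + blockCount v := by
  rw [directBlockages_eq_sum, directBlockages_eq_sum]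
  have : ∀ s, blockCount (Function.update D s₀ v s) =
      Function.update (fun s => blockCount (D s)) s₀ (blockCount v) s := by
    intro s
    exact Function.apply_update (fun _ l => blockCount l) D s₀ v s
  rw [Finset.sum_congr rfl fun s _ => this s]
  exact sum_update_nat _ s₀ _

end Aux

section Aux2

variable {B S : ℕ}

lemma play_append : ∀ (p q : List (Move S)) (D : Config B S),
    play D (p ++ q) = play (play D p) q := by
  intro p
  induction p with
  | nil => intro q D; rfl
  | cons m p ih => intro q D; exact ih q (applyMove D m)

lemma allEnabled_append : ∀ (p q : List (Move S)) (D : Config B S),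
    AllEnabled D (p ++ q) ↔ (AllEnabled D p ∧ AllEnabled (play D p) q) := by
  intro p
  induction p with
  | nil => intro q D; simp [AllEnabled, play]
  | cons m p ih =>
    intro q D
    show (Enabled D m ∧ AllEnabled (applyMove D m) (p ++ q)) ↔ _
    rw [ih q (applyMove D m)]
    show _ ↔ ((Enabled D m ∧ AllEnabled (applyMove D m) p) ∧ _)
    tauto

lemma relocCount_append (p q : List (Move S)) :
    relocCount (p ++ q) = relocCount p + relocCount q := by
  simp [relocCount]

lemma relocCount_retrieve_cons (s : Fin S) (ms : List (Move S)) :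
    relocCount (Move.retrieve s :: ms) = relocCount ms := by
  simp [relocCount]

lemma relocCount_relocate_cons (s t : Fin S) (ms : List (Move S)) :
    relocCount (Move.relocate s t :: ms) = relocCount ms + 1 := by
  simp [relocCount, Nat.add_comm]

lemma exists_prefix_relocCount : ∀ (ms : List (Move S)) (L : ℕ), L ≤ relocCount ms →
    ∃ p q, ms = p ++ q ∧ relocCount p = L := by
  intro ms
  induction ms with
  | nil =>
    intro L h
    simp [relocCount] at h
    exact ⟨[], [], rfl, by simp [relocCount, h]⟩
  | cons m ms ih =>
    intro L h
    rcases Nat.eq_zero_or_pos L with rfl | hL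
    · exact ⟨[], m :: ms, rfl, by simp [relocCount]⟩
    · cases m with
      | retrieve s =>
        rw [relocCount_retrieve_cons] at h
        obtain ⟨p, q, rfl, hp⟩ := ih L h
        exact ⟨Move.retrieve s :: p, q, rfl, by rw [relocCount_retrieve_cons, hp]⟩
      | relocate s t =>
        rw [relocCount_relocate_cons] at h
        obtain ⟨p, q, rfl, hp⟩ := ih (L - 1) (by omega)
        exact ⟨Move.relocate s t :: p, q, rfl, by rw [relocCount_relocate_cons, hp]; omega⟩

/-- Lower bound: any complete emptying from `D` uses at least `directBlockages D`
relocations. -/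
lemma directBlockages_le_relocCount : ∀ (ms : List (Move S)) (D : Config B S),
    AllEnabled D ms → (∀ s, play D ms s = []) → directBlockages D ≤ relocCount ms := by
  intro ms
  induction ms with
  | nil =>
    intro D _ hempty
    have : directBlockages D = 0 := by
      rw [directBlockages_eq_sum]
      refine Finset.sum_eq_zero fun s _ => ?_
      rw [show D s = [] from hempty s]; rfl
    simp [this]
  | cons m ms ih =>
    intro D hen hempty
    obtain ⟨hm, hrest⟩ := hen
    have h2 := ih (applyMove D m) hrest hempty
    cases m with
    | retrieve s =>
      obtain ⟨b, hb, hmin⟩ := hm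
      have hkey := directBlockages_update D s (D s).dropLast
      have heq : blockCount (D s) = blockCount (D s).dropLast :=
        blockCount_dropLast_of_min (D s) b hb (fun x hx => hmin s x hx)
      have happ : applyMove D (Move.retrieve s) = Function.update D s (D s).dropLast := rfl
      rw [relocCount_retrieve_cons]
      rw [happ] at h2
      omega
    | relocate src dst =>
      obtain ⟨hne, hnonempty⟩ := hm
      obtain ⟨b, hb⟩ : ∃ b, (D src).getLast? = some b := by
        rcases h : (D src).getLast? with _ | b
        · exact absurd (List.getLast?_eq_none_iff.1 h) hnonempty
        · exact ⟨b, rfl⟩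
      set D' := Function.update D src (D src).dropLast with hD'
      have happ : applyMove D (Move.relocate src dst) =
          Function.update D' dst (D' dst ++ [b]) := by
        simp [applyMove, hb]
        rfl
      have hkey1 := directBlockages_update D src (D src).dropLast
      rw [← hD'] at hkey1
      have hkey2 := directBlockages_update D' dst (D' dst ++ [b])
      have h3 := blockCount_dropLast_le (D src)
      have h4 := le_blockCount_concat (D' dst) b
      rw [relocCount_relocate_cons]
      rw [happ] at h2
      omega

end Aux2

section Aux3

variable {B S : ℕ}

lemma sum_length_pos_of_ne_nil {D : Config B S} {s₁ : Fin S} (h : D s₁ ≠ []) :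
    0 < ∑ s, (D s).length := by
  have h1 : 0 < (D s₁).length := List.length_pos_iff.2 h
  have h2 : (D s₁).length ≤ ∑ s, (D s).length :=
    Finset.single_le_sum (f := fun s => (D s).length) (fun s _ => Nat.zero_le _)
      (Finset.mem_univ s₁)
  omega

lemma sum_length_update (D : Config B S) (s₀ : Fin S) (v : List (Fin B)) :
    (∑ s, (Function.update D s₀ v s).length) + (D s₀).length
      = (∑ s, (D s).length) + v.length := by
  have : ∀ s, (Function.update D s₀ v s).length =
      Function.update (fun s => (D s).length) s₀ v.length s := fun s =>
    Function.apply_update (fun _ l => l.length) D s₀ v s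
  rw [Finset.sum_congr rfl fun s _ => this s]
  exact sum_update_nat _ s₀ _

/-- A configuration with no direct blockages can be emptied by retrievals only. -/
lemma empty_of_noblock : ∀ (n : ℕ) (D : Config B S), (∑ s, (D s).length) = n →
    directBlockages D = 0 →
    ∃ ms, AllEnabled D ms ∧ (∀ s, play D ms s = []) ∧ relocCount ms = 0 := by
  intro n
  induction n using Nat.strong_induction_on with
  | _ n ih =>
  intro D hn h0
  by_cases hall : ∀ s, D s = []
  · exact ⟨[], trivial, hall, rfl⟩
  push_neg at hall
  obtain ⟨s₁, hs₁⟩ := hall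
  classical
  have hPne : (Finset.univ.filter (fun b : Fin B => ∃ s, b ∈ D s)).Nonempty := by
    obtain ⟨x, hx⟩ := List.exists_mem_of_ne_nil _ hs₁
    exact ⟨x, by simp only [Finset.mem_filter, Finset.mem_univ, true_and]; exact ⟨s₁, hx⟩⟩
  set b := (Finset.univ.filter (fun b : Fin B => ∃ s, b ∈ D s)).min' hPne with hb
  have hbmin : ∀ s x, x ∈ D s → b ≤ x := fun s x hx =>
    Finset.min'_le _ x (by
      simp only [Finset.mem_filter, Finset.mem_univ, true_and]
      exact ⟨s, hx⟩)
  obtain ⟨s₀, hbs₀⟩ : ∃ s, b ∈ D s := by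
    have := Finset.min'_mem _ hPne
    rw [← hb] at this
    simpa using this
  have hne : D s₀ ≠ [] := fun h => by rw [h] at hbs₀; simp at hbs₀
  obtain ⟨y, hy⟩ : ∃ y, (D s₀).getLast? = some y :=
    ⟨_, List.getLast?_eq_getLast_of_ne_nil hne⟩
  have hbc0 : blockCount (D s₀) = 0 := by
    have := (Finset.sum_eq_zero_iff.1 (by rw [← directBlockages_eq_sum]; exact h0)) s₀
      (Finset.mem_univ s₀)
    exact this
  have hyb : y ≤ b := blockCount_zero_getLast_le (D s₀) hbc0 b hbs₀ y hy
  have hymin : ∀ s' : Fin S, ∀ x ∈ D s', y ≤ x := fun s' x hx =>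
    le_trans hyb (hbmin s' x hx)
  set D' := Function.update D s₀ (D s₀).dropLast with hD'
  have hlen := sum_length_update D s₀ (D s₀).dropLast
  rw [← hD'] at hlen
  have hdlen : (D s₀).dropLast.length = (D s₀).length - 1 := List.length_dropLast
  have hpos : 0 < (D s₀).length := List.length_pos_iff.2 hne
  have hkey := directBlockages_update D s₀ (D s₀).dropLast
  rw [← hD'] at hkey
  have hdrop := blockCount_dropLast_le (D s₀)
  have h0' : directBlockages D' = 0 := by omega
  obtain ⟨ms, hms1, hms2, hms3⟩ := ih (n - 1) (by omega) D' (by omega) h0'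
  refine ⟨Move.retrieve s₀ :: ms, ⟨⟨y, hy, hymin⟩, hms1⟩, hms2, ?_⟩
  rw [relocCount_retrieve_cons, hms3]

lemma exists_feasible_aux (hS : 2 ≤ S) (n : ℕ)
    (ih : ∀ m, m < n → ∀ D : Config B S, (∑ s, (D s).length) = m → ∃ ms, Feasible D ms) :
    ∀ (k : ℕ) (D : Config B S) (s₀ : Fin S) (b : Fin B) (l₁ l₂ : List (Fin B)),
      (∑ s, (D s).length) = n → (∀ s x, x ∈ D s → b ≤ x) →
      D s₀ = l₁ ++ b :: l₂ → l₂.length = k → ∃ ms, Feasible D ms := by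
  intro k
  induction k with
  | zero =>
    intro D s₀ b l₁ l₂ hn hmin hdec hk
    have hl₂ : l₂ = [] := List.eq_nil_of_length_eq_zero hk
    subst hl₂
    have hlast : (D s₀).getLast? = some b := by
      rw [hdec]
      exact List.getLast?_concat
    have hne : D s₀ ≠ [] := by rw [hdec]; simp
    set D' := Function.update D s₀ (D s₀).dropLast with hD'
    have hlen := sum_length_update D s₀ (D s₀).dropLast
    rw [← hD'] at hlen
    have hdlen : (D s₀).dropLast.length = (D s₀).length - 1 := List.length_dropLast
    have hpos : 0 < (D s₀).length := List.length_pos_iff.2 hne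
    obtain ⟨ms, hms1, hms2⟩ := ih (n - 1) (by omega) D' (by omega)
    exact ⟨Move.retrieve s₀ :: ms, ⟨⟨b, hlast, fun s' x hx => hmin s' x hx⟩, hms1⟩, hms2⟩
  | succ k ihk =>
    intro D s₀ b l₁ l₂ hn hmin hdec hk
    have hl₂ne : l₂ ≠ [] := by intro h; rw [h] at hk; simp at hk
    obtain ⟨t₂, t, rfl⟩ := l₂.eq_nil_or_concat'.resolve_left hl₂ne
    have hdec' : D s₀ = (l₁ ++ b :: t₂) ++ [t] := by rw [hdec]; simp
    have hlast : (D s₀).getLast? = some t := by rw [hdec']; exact List.getLast?_concat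
    have hne : D s₀ ≠ [] := by rw [hdec]; simp
    obtain ⟨s', hs'⟩ : ∃ s' : Fin S, s' ≠ s₀ := by
      have : 1 < Fintype.card (Fin S) := by simpa using by omega
      exact Fintype.exists_ne_of_one_lt_card this s₀
    have hense : Enabled D (Move.relocate s₀ s') := ⟨fun h => hs' h.symm, hne⟩
    set D₁ := Function.update D s₀ (D s₀).dropLast with hD₁
    set E := Function.update D₁ s' (D₁ s' ++ [t]) with hE
    have happ : applyMove D (Move.relocate s₀ s') = E := by
      simp [applyMove, hlast, hE, hD₁]
    have hEs₀ : E s₀ = l₁ ++ b :: t₂ := by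
      rw [hE, hD₁]
      rw [Function.update_of_ne (fun h => hs' h.symm), Function.update_self, hdec',
        List.dropLast_concat]
    have hD₁s' : D₁ s' = D s' := Function.update_of_ne hs' _ _
    -- total length preserved
    have hlen1 := sum_length_update D s₀ (D s₀).dropLast
    rw [← hD₁] at hlen1
    have hlen2 := sum_length_update D₁ s' (D₁ s' ++ [t])
    rw [← hE] at hlen2
    have hdlen : (D s₀).dropLast.length = (D s₀).length - 1 := List.length_dropLast
    have hpos : 0 < (D s₀).length := List.length_pos_iff.2 hne
    have hlenE : (∑ s, (E s).length) = n := by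
      rw [List.length_append, List.length_singleton] at hlen2
      omega
    -- minimality preserved
    have hminE : ∀ s x, x ∈ E s → b ≤ x := by
      intro s x hx
      rcases eq_or_ne s s' with rfl | hss'
      · rw [hE, Function.update_self, hD₁s'] at hx
        rcases List.mem_append.1 hx with hx | hx
        · exact hmin s x hx
        · rw [List.mem_singleton] at hx
          subst hx
          exact hmin s₀ x (List.mem_of_mem_getLast? hlast)
      · rw [hE, Function.update_of_ne hss'] at hx
        rcases eq_or_ne s s₀ with rfl | hss₀
        · rw [hD₁, Function.update_self] at hx
          exact hmin s x (List.dropLast_subset _ hx)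
        · rw [hD₁, Function.update_of_ne hss₀] at hx
          exact hmin s x hx
    obtain ⟨ms, hms1, hms2⟩ := ihk E s₀ b l₁ t₂ hlenE hminE hEs₀ (by
      rw [List.length_append, List.length_singleton] at hk
      omega)
    refine ⟨Move.relocate s₀ s' :: ms, ⟨hense, ?_⟩, ?_⟩
    · rw [show applyMove D (Move.relocate s₀ s') = E from happ]; exact hms1
    · intro s; rw [show play D (Move.relocate s₀ s' :: ms) = play E ms from by
        show play (applyMove D _) ms = _; rw [happ]]
      exact hms2 s

/-- From any configuration there is a feasible move sequence. -/
lemma exists_feasible (hS : 2 ≤ S) : ∀ (n : ℕ) (D : Config B S),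
    (∑ s, (D s).length) = n → ∃ ms, Feasible D ms := by
  intro n
  induction n using Nat.strong_induction_on with
  | _ n ih =>
  intro D hn
  by_cases hall : ∀ s, D s = []
  · exact ⟨[], trivial, hall⟩
  push_neg at hall
  obtain ⟨s₁, hs₁⟩ := hall
  classical
  have hPne : (Finset.univ.filter (fun b : Fin B => ∃ s, b ∈ D s)).Nonempty := by
    obtain ⟨x, hx⟩ := List.exists_mem_of_ne_nil _ hs₁
    exact ⟨x, by simp only [Finset.mem_filter, Finset.mem_univ, true_and]; exact ⟨s₁, hx⟩⟩
  set b := (Finset.univ.filter (fun b : Fin B => ∃ s, b ∈ D s)).min' hPne with hb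
  have hbmin : ∀ s x, x ∈ D s → b ≤ x := fun s x hx =>
    Finset.min'_le _ x (by
      simp only [Finset.mem_filter, Finset.mem_univ, true_and]
      exact ⟨s, hx⟩)
  obtain ⟨s₀, hbs₀⟩ : ∃ s, b ∈ D s := by
    have := Finset.min'_mem _ hPne
    rw [← hb] at this
    simpa using this
  obtain ⟨l₁, l₂, hdec⟩ := List.append_of_mem hbs₀
  exact exists_feasible_aux hS n ih l₂.length D s₀ b l₁ l₂ hn hbmin hdec rfl

end Aux3

/-- Theorem 7, convergence of the iterative scheme: with
`opt = f(Fin B)` and `g(L) = L + ` (minimum number of direct blockages over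
partial plans with `L` relocations): (i) `L ≤ g(L) ≤ opt` for `L ≤ opt`;
(ii) `g(opt) = opt`; (iii) `g(L) > L` for `L < opt`; consequently, iterating `g`
from any `L₀ ≤ opt` is strictly increasing until reaching `opt`, which it
reaches after at most `opt − L₀` iterations. -/
theorem brp_iterative_scheme {B S : ℕ} (hS : 2 ≤ S) (hB : 1 ≤ B)
    (C : Config B S) (hC : IsConfig C) :
    (∀ L, L ≤ fAll C → L ≤ gIter C L ∧ gIter C L ≤ fAll C) ∧
    gIter C (fAll C) = fAll C ∧
    (∀ L, L < fAll C → L < gIter C L) ∧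
    (∀ L₀, L₀ ≤ fAll C →
      (gIter C)^[fAll C - L₀] L₀ = fAll C ∧
      ∀ i, (gIter C)^[i] L₀ < fAll C → (gIter C)^[i] L₀ < (gIter C)^[i + 1] L₀) := by
  classical
  set opt := fAll C with hopt
  have hgdef : ∀ L, gIter C L = L + sInf { d | ∃ ms : List (Move S), AllEnabled C ms ∧
      relocCount ms = L ∧ d = directBlockages (play C ms) } := fun L => rfl
  obtain ⟨ms₀, hms₀⟩ := exists_feasible hS (∑ s, (C s).length) C rfl
  have hset_ne : { n | ∃ ms, Feasible C ms ∧ relocCount ms = n }.Nonempty :=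
    ⟨relocCount ms₀, ms₀, hms₀, rfl⟩
  obtain ⟨msO, hOfeas, hOrc⟩ : ∃ ms, Feasible C ms ∧ relocCount ms = opt :=
    Nat.sInf_mem hset_ne
  have hprefix : ∀ L, L ≤ opt → ∃ p q : List (Move S),
      AllEnabled C p ∧ relocCount p = L ∧ AllEnabled (play C p) q ∧
      (∀ s, play (play C p) q s = []) ∧ relocCount p + relocCount q = opt := by
    intro L hL
    obtain ⟨p, q, hpq, hp⟩ := exists_prefix_relocCount msO L (by rw [hOrc]; exact hL)
    subst hpq
    have hae := (allEnabled_append p q C).1 hOfeas.1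
    refine ⟨p, q, hae.1, hp, hae.2, ?_, ?_⟩
    · intro s; rw [← play_append]; exact hOfeas.2 s
    · rw [← relocCount_append]; exact hOrc
  have hi : ∀ L, L ≤ opt → L ≤ gIter C L ∧ gIter C L ≤ opt := by
    intro L hL
    refine ⟨Nat.le_add_right _ _, ?_⟩
    obtain ⟨p, q, hp1, hp2, hq1, hq2, hsum⟩ := hprefix L hL
    have hdb : directBlockages (play C p) ≤ relocCount q :=
      directBlockages_le_relocCount q _ hq1 hq2
    have hmem : directBlockages (play C p) ∈
        { d | ∃ ms : List (Move S), AllEnabled C ms ∧ relocCount ms = L ∧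
          d = directBlockages (play C ms) } := ⟨p, hp1, hp2, rfl⟩
    have hle := Nat.sInf_le hmem
    rw [hgdef L]
    omega
  have hii : gIter C opt = opt := by
    have hmem : (0 : ℕ) ∈ { d | ∃ ms : List (Move S), AllEnabled C ms ∧
        relocCount ms = opt ∧ d = directBlockages (play C ms) } := by
      refine ⟨msO, hOfeas.1, hOrc, ?_⟩
      rw [directBlockages_eq_sum]
      exact (Finset.sum_eq_zero fun s _ => by rw [hOfeas.2 s]; rfl).symm
    have hle := Nat.sInf_le hmem
    rw [hgdef opt]
    omega
  have hiii : ∀ L, L < opt → L < gIter C L := by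
    intro L hL
    obtain ⟨p, q, hp1, hp2, _, _, _⟩ := hprefix L (le_of_lt hL)
    have hne : { d | ∃ ms : List (Move S), AllEnabled C ms ∧ relocCount ms = L ∧
        d = directBlockages (play C ms) }.Nonempty := ⟨_, p, hp1, hp2, rfl⟩
    obtain ⟨ms1, h1, h2, h3⟩ := Nat.sInf_mem hne
    have hpos : 0 < sInf { d | ∃ ms : List (Move S), AllEnabled C ms ∧ relocCount ms = L ∧
        d = directBlockages (play C ms) } := by
      rcases Nat.eq_zero_or_pos (sInf { d | ∃ ms : List (Move S), AllEnabled C ms ∧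
        relocCount ms = L ∧ d = directBlockages (play C ms) }) with h0 | h
      · exfalso
        have hz : directBlockages (play C ms1) = 0 := by omega
        obtain ⟨ms2, k1, k2, k3⟩ :=
          empty_of_noblock (∑ s, ((play C ms1) s).length) (play C ms1) rfl hz
        have hfeas2 : Feasible C (ms1 ++ ms2) :=
          ⟨(allEnabled_append _ _ _).2 ⟨h1, k1⟩, fun s => by rw [play_append]; exact k2 s⟩
        have hmem2 : L ∈ { n | ∃ ms, Feasible C ms ∧ relocCount ms = n } :=
          ⟨ms1 ++ ms2, hfeas2, by simp [relocCount_append, h2, k3]⟩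
        have hle2 : opt ≤ L := Nat.sInf_le hmem2
        omega
      · exact h
    rw [hgdef L]
    omega
  refine ⟨hi, hii, hiii, ?_⟩
  have key : ∀ k L, L ≤ opt → opt ≤ L + k → (gIter C)^[k] L = opt := by
    intro k
    induction k with
    | zero =>
      intro L h1 h2
      simp only [Function.iterate_zero, id_eq]
      omega
    | succ k ihk =>
      intro L h1 h2
      rw [Function.iterate_succ_apply]
      rcases eq_or_lt_of_le h1 with heq | hlt
      · rw [heq, hii]; exact ihk opt le_rfl (by omega)
      · have h3 := (hi L (le_of_lt hlt)).2
        have h4 := hiii L hlt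
        exact ihk (gIter C L) h3 (by omega)
  intro L₀ hL₀
  exact ⟨key (opt - L₀) L₀ hL₀ (by omega), fun i hlt => by
    rw [Function.iterate_succ_apply']; exact hiii _ hlt⟩
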